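/- Define C_min(d) = log d − (1 − 1/d) log(d+1) (logs base 2) for integers d ≥ 2. Then C_min(2) < C_min(3) < C_min(4) and C_min(d) > C_min(d+1) for all d ≥ 4; in particular C_min attains its maximum over integers d ≥ 2 at d = 4. -/

import Mathlib

noncomputable def Cmin (d : ℕ) : ℝ :=
  Real.logb 2 d - (1 - 1 / (d : ℝ)) * Real.logb 2 ((d : ℝ) + 1)

open Real

lemma log2pos : (0:ℝ) < Real.log 2 := Real.log_pos (by norm_num)

lemma div_log2_lt {A B : ℝ} (h : A < B) : A / Real.log 2 < B / Real.log 2 :=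
  (div_lt_div_iff_of_pos_right log2pos).mpr h

lemma exp_bound (n : ℕ) (hn : n ≠ 0) (c : ℝ) (h : (2.7182818286:ℝ)^n ≤ c) :
    Real.exp n < c := by
  calc Real.exp (n:ℝ) = Real.exp 1 ^ n := (Real.exp_one_pow n).symm
    _ < 2.7182818286 ^ n :=
        pow_lt_pow_left₀ Real.exp_one_lt_d9 (le_of_lt (Real.exp_pos 1)) hn
    _ ≤ c := h

lemma log8 : (2:ℝ) < Real.log 8 := by
  rw [Real.lt_log_iff_exp_lt (by norm_num)]
  have : Real.exp ((2:ℕ):ℝ) < 8 := exp_bound 2 (by norm_num) 8 (by norm_num)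
  simpa using this

lemma log6 : (12:ℝ)/7 < Real.log 6 := by
  have h12 : Real.exp ((12:ℕ):ℝ) < 6^7 := exp_bound 12 (by norm_num) (6^7) (by norm_num)
  rw [Real.lt_log_iff_exp_lt (by norm_num)]
  have hpow : Real.exp (12/7 : ℝ) ^ 7 = Real.exp ((12:ℕ):ℝ) := by
    rw [← Real.exp_nat_mul]; norm_num
  refine lt_of_pow_lt_pow_left₀ 7 (by norm_num) ?_
  rw [hpow]; exact h12

lemma log7 : (7:ℝ)/4 < Real.log 7 := by
  have h7 : Real.exp ((7:ℕ):ℝ) < 7^4 := exp_bound 7 (by norm_num) (7^4) (by norm_num)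
  rw [Real.lt_log_iff_exp_lt (by norm_num)]
  have hpow : Real.exp (7/4 : ℝ) ^ 4 = Real.exp ((7:ℕ):ℝ) := by
    rw [← Real.exp_nat_mul]; norm_num
  refine lt_of_pow_lt_pow_left₀ 4 (by norm_num) ?_
  rw [hpow]; exact h7

lemma key {x : ℝ} (hx : 5 ≤ x)
    (hL : 1 + x/(x+2) < Real.log (x+1)) :
    Real.log (x+1) - (1 - 1/(x+1)) * Real.log (x+2)
      < Real.log x - (1 - 1/x) * Real.log (x+1) := by
  have hx0 : (0:ℝ) < x := by linarith
  have hx1 : (0:ℝ) < x + 1 := by linarith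
  have hx2 : (0:ℝ) < x + 2 := by linarith
  set L := Real.log (x+1) with hLdef
  set M := Real.log (x+2) with hMdef
  have hb : L - Real.log x ≤ 1/x := by
    have h := Real.log_le_sub_one_of_pos (x := (x+1)/x) (by positivity)
    rw [Real.log_div (by linarith) (ne_of_gt hx0)] at h
    have : (x+1)/x - 1 = 1/x := by field_simp; ring
    linarith [h, this.le]
  have hab : -(1/(x*(x+2))) ≤ Real.log x + M - 2*L := by
    have h := Real.log_le_sub_one_of_pos (x := (x+1)^2/(x*(x+2))) (by positivity)
    rw [Real.log_div (by positivity) (by positivity), Real.log_pow,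
      Real.log_mul (ne_of_gt hx0) (ne_of_gt hx2)] at h
    have he : (x+1)^2/(x*(x+2)) - 1 = 1/(x*(x+2)) := by field_simp; ring
    push_cast at h
    linarith [h, he.le]
  have h1 : -1 ≤ x * (Real.log x - L) := by
    have := mul_le_mul_of_nonneg_left hb (le_of_lt hx0)
    have hx' : x * (1/x) = 1 := by field_simp
    nlinarith
  have h2 : -(x/(x+2)) ≤ x^2 * (Real.log x + M - 2*L) := by
    have := mul_le_mul_of_nonneg_left hab (le_of_lt (by positivity : (0:ℝ) < x^2))
    have hx' : x^2 * (-(1/(x*(x+2)))) = -(x/(x+2)) := by field_simp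
    linarith [hx' ▸ this]
  have key2 : 0 < x*(x+1)*((Real.log x - (1 - 1/x) * L) - (L - (1 - 1/(x+1)) * M)) := by
    have e1 : x*(x+1)*((Real.log x - (1 - 1/x) * L) - (L - (1 - 1/(x+1)) * M))
        = x^2*(Real.log x + M - 2*L) + x*(Real.log x - L) + L := by
      field_simp
      ring
    rw [e1]
    linarith
  nlinarith [key2, mul_pos hx0 hx1]

lemma step (d : ℕ) (hd : 4 ≤ d) : Cmin (d+1) < Cmin d := by
  rcases eq_or_lt_of_le hd with h4 | h5
  · -- d = 4 : 5^35 < 4^20 * 6^16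
    rw [← h4]
    have hnum : ((5:ℝ))^35 < 4^20 * 6^16 := by norm_num
    have h := Real.log_lt_log (by positivity) hnum
    rw [Real.log_mul (by positivity) (by positivity), Real.log_pow, Real.log_pow,
      Real.log_pow] at h
    push_cast at h
    simp only [Cmin, Real.logb]
    push_cast
    rw [show (5:ℝ)+1 = 6 by norm_num,
      show Real.log 5 / Real.log 2 - (1 - 1/5) * (Real.log 6 / Real.log 2)
        = (Real.log 5 - (4/5)*Real.log 6)/Real.log 2 from by ring,
      show Real.log 4 / Real.log 2 - (1 - 1/4) * (Real.log (4+1) / Real.log 2)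
        = (Real.log 4 - (3/4)*Real.log 5)/Real.log 2 from by norm_num; ring]
    exact div_log2_lt (by linarith)
  · have hd5 : 5 ≤ d := h5
    have hx : (5:ℝ) ≤ (d:ℝ) := by exact_mod_cast hd5
    set x := (d:ℝ) with hxdef
    have hL : 1 + x/(x+2) < Real.log (x+1) := by
      rcases Nat.lt_or_ge d 7 with h | h
      · interval_cases d
        · rw [show x = 5 from by norm_num [hxdef]]
          norm_num
          linarith [log6]
        · rw [show x = 6 from by norm_num [hxdef]]
          norm_num
          linarith [log7]
      · have h7 : (7:ℝ) ≤ x := by rw [hxdef]; exact_mod_cast h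
        have hlog : Real.log 8 ≤ Real.log (x+1) :=
          Real.log_le_log (by norm_num) (by linarith)
        have hfrac : x/(x+2) < 1 := (div_lt_one (by linarith)).mpr (by linarith)
        linarith [log8]
    have hk := key hx hL
    have e1 : Cmin (d+1) = (Real.log (x+1) - (1 - 1/(x+1)) * Real.log (x+2))/Real.log 2 := by
      simp only [Cmin, Real.logb]; push_cast; rw [hxdef]; ring
    have e2 : Cmin d = (Real.log x - (1 - 1/x) * Real.log (x+1))/Real.log 2 := by
      simp only [Cmin, Real.logb]; push_cast; ring
    rw [e1, e2]
    exact div_log2_lt hk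

theorem cmin_max_at_four :
    Cmin 2 < Cmin 3 ∧ Cmin 3 < Cmin 4 ∧
      (∀ d : ℕ, 4 ≤ d → Cmin d > Cmin (d + 1)) ∧
      (∀ d : ℕ, 2 ≤ d → Cmin d ≤ Cmin 4) := by
  have h23 : Cmin 2 < Cmin 3 := by
    have hnum : ((2:ℝ))^6 * 4^4 < 3^9 := by norm_num
    have h := Real.log_lt_log (by positivity) hnum
    rw [Real.log_mul (by positivity) (by positivity), Real.log_pow, Real.log_pow,
      Real.log_pow] at h
    push_cast at h
    simp only [Cmin, Real.logb]
    push_cast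
    rw [show (2:ℝ)+1 = 3 by norm_num, show (3:ℝ)+1 = 4 by norm_num,
      show Real.log 2 / Real.log 2 - (1 - 1/2) * (Real.log 3 / Real.log 2)
        = (Real.log 2 - (1/2)*Real.log 3)/Real.log 2 from by ring,
      show Real.log 3 / Real.log 2 - (1 - 1/3) * (Real.log 4 / Real.log 2)
        = (Real.log 3 - (2/3)*Real.log 4)/Real.log 2 from by ring]
    exact div_log2_lt (by linarith)
  have h34 : Cmin 3 < Cmin 4 := by
    have hnum : ((3:ℝ))^12 * 5^9 < 4^20 := by norm_num
    have h := Real.log_lt_log (by positivity) hnum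
    rw [Real.log_mul (by positivity) (by positivity), Real.log_pow, Real.log_pow,
      Real.log_pow] at h
    push_cast at h
    simp only [Cmin, Real.logb]
    push_cast
    rw [show (3:ℝ)+1 = 4 by norm_num, show (4:ℝ)+1 = 5 by norm_num,
      show Real.log 3 / Real.log 2 - (1 - 1/3) * (Real.log 4 / Real.log 2)
        = (Real.log 3 - (2/3)*Real.log 4)/Real.log 2 from by ring,
      show Real.log 4 / Real.log 2 - (1 - 1/4) * (Real.log 5 / Real.log 2)
        = (Real.log 4 - (3/4)*Real.log 5)/Real.log 2 from by ring]
    exact div_log2_lt (by linarith)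
  have hmono : ∀ d : ℕ, 4 ≤ d → Cmin d ≤ Cmin 4 := by
    intro d hd
    induction d, hd using Nat.le_induction with
    | base => exact le_refl _
    | succ n hn ih => exact le_trans (step n hn).le ih
  refine ⟨h23, h34, fun d hd => step d hd, fun d hd => ?_⟩
  rcases Nat.lt_or_ge d 4 with h | h
  · interval_cases d
    · exact le_of_lt (lt_trans h23 h34)
    · exact le_of_lt h34
  · exact hmono d h
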